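/- Let Σ₁ and Σ₂ be symmetric positive definite d×d real matrices, and define A = Σ₂^{1/2}(Σ₂^{1/2} Σ₁ Σ₂^{1/2})^{−1/2} Σ₂^{1/2}. Then A is symmetric positive definite and A Σ₁ A = Σ₂. -/

import Mathlib

open MeasureTheory ProbabilityTheory Matrix
open scoped ENNReal NNReal

noncomputable section

abbrev Ed (d : ℕ) := EuclideanSpace ℝ (Fin d)

/-- A coupling of `μ` and `ν`: a measure on the product whose marginals are `μ` and `ν`. -/
def IsCoupling {d : ℕ} (γ : Measure (Ed d × Ed d)) (μ ν : Measure (Ed d)) : Prop :=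
  γ.map Prod.fst = μ ∧ γ.map Prod.snd = ν

/-- Quadratic transport cost of a coupling. -/
def cost2 {d : ℕ} (γ : Measure (Ed d × Ed d)) : ℝ≥0∞ :=
  ∫⁻ p, ENNReal.ofReal (‖p.1 - p.2‖ ^ 2) ∂γ

/-- Squared 2-Wasserstein distance. -/
def W2sq {d : ℕ} (μ ν : Measure (Ed d)) : ℝ≥0∞ :=
  ⨅ (γ : Measure (Ed d × Ed d)) (_ : IsCoupling γ μ ν), cost2 γ

/-- 2-Wasserstein distance. -/
def W2 {d : ℕ} (μ ν : Measure (Ed d)) : ℝ :=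
  Real.sqrt (W2sq μ ν).toReal

/-- Finite second moment. -/
def FiniteSecondMoment {d : ℕ} (μ : Measure (Ed d)) : Prop :=
  ∫⁻ x, ENNReal.ofReal (‖x‖ ^ 2) ∂μ < ⊤

/-- Mean vector of a measure. -/
def meanVec {d : ℕ} (μ : Measure (Ed d)) : Ed d := ∫ x, x ∂μ

/-- Covariance matrix of a measure. -/
def covMatrix {d : ℕ} (μ : Measure (Ed d)) : Matrix (Fin d) (Fin d) ℝ :=
  Matrix.of fun i j => ∫ x, (x i - meanVec μ i) * (x j - meanVec μ j) ∂μ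

/-- The square root of a positive semidefinite matrix (removed from Mathlib; old definition). -/
def Matrix.PosSemidef.sqrt {n : Type*} [Fintype n] [DecidableEq n]
    {A : Matrix n n ℝ} (hA : A.PosSemidef) : Matrix n n ℝ :=
  hA.1.eigenvectorUnitary.1 * diagonal (Real.sqrt ∘ hA.1.eigenvalues) *
    (star hA.1.eigenvectorUnitary : Matrix n n ℝ)

/-- Positive semidefinite square root of a matrix (junk value `0` if not psd). -/
def msqrt {d : ℕ} (S : Matrix (Fin d) (Fin d) ℝ) : Matrix (Fin d) (Fin d) ℝ :=
  @dite _ S.PosSemidef (Classical.dec _) (fun h => h.sqrt) (fun _ => 0)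

/-- Standard Gaussian measure on `ℝ^d`. -/
def stdGaussian (d : ℕ) : Measure (Ed d) :=
  (Measure.pi fun _ : Fin d => gaussianReal 0 1).map (EuclideanSpace.equiv (Fin d) ℝ).symm

/-- Gaussian measure on `ℝ^d` with mean `m` and covariance `S`. -/
def gaussianE {d : ℕ} (m : Ed d) (S : Matrix (Fin d) (Fin d) ℝ) : Measure (Ed d) :=
  (stdGaussian d).map fun x => m + (msqrt S).toEuclideanLin x

/-- Normal approximation: Gaussian with the same mean and covariance as `μ`. -/
def normalApprox {d : ℕ} (μ : Measure (Ed d)) : Measure (Ed d) :=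
  gaussianE (meanVec μ) (covMatrix μ)

lemma Matrix.PosSemidef.posSemidef_sqrt {n : Type*} [Fintype n] [DecidableEq n]
    {A : Matrix n n ℝ} (hA : A.PosSemidef) : hA.sqrt.PosSemidef := by
  unfold Matrix.PosSemidef.sqrt
  have hD : (diagonal (Real.sqrt ∘ hA.1.eigenvalues)).PosSemidef :=
    posSemidef_diagonal_iff.mpr fun i => Real.sqrt_nonneg _
  have := hD.mul_mul_conjTranspose_same (hA.1.eigenvectorUnitary : Matrix n n ℝ)
  simpa [Unitary.coe_star, star_eq_conjTranspose] using this

lemma Matrix.PosSemidef.sqrt_mul_self {n : Type*} [Fintype n] [DecidableEq n]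
    {A : Matrix n n ℝ} (hA : A.PosSemidef) : hA.sqrt * hA.sqrt = A := by
  unfold Matrix.PosSemidef.sqrt
  set U := hA.1.eigenvectorUnitary
  have hU : (star U : Matrix n n ℝ) * (U : Matrix n n ℝ) = 1 := Unitary.coe_star_mul_self U
  have hDD : diagonal (Real.sqrt ∘ hA.1.eigenvalues) * diagonal (Real.sqrt ∘ hA.1.eigenvalues)
      = diagonal hA.1.eigenvalues := by
    rw [diagonal_mul_diagonal]
    congr 1; funext i
    exact Real.mul_self_sqrt (hA.eigenvalues_nonneg i)
  calc (U : Matrix n n ℝ) * diagonal (Real.sqrt ∘ hA.1.eigenvalues) * (star U : Matrix n n ℝ) *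
        ((U : Matrix n n ℝ) * diagonal (Real.sqrt ∘ hA.1.eigenvalues) * (star U : Matrix n n ℝ))
      = (U : Matrix n n ℝ) * (diagonal (Real.sqrt ∘ hA.1.eigenvalues) *
          ((star U : Matrix n n ℝ) * (U : Matrix n n ℝ)) * diagonal (Real.sqrt ∘ hA.1.eigenvalues))
          * (star U : Matrix n n ℝ) := by simp only [Matrix.mul_assoc]
    _ = (U : Matrix n n ℝ) * diagonal hA.1.eigenvalues * (star U : Matrix n n ℝ) := by
          rw [hU, Matrix.mul_one, hDD]
    _ = A := by
          conv_rhs => rw [hA.1.spectral_theorem]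
          simp [U]

lemma auxPosDefOfUnit {n : Type*} [Fintype n] [DecidableEq n] {M : Matrix n n ℝ}
    (hM : M.PosSemidef) (h : M.det ≠ 0) : M.PosDef := by
  refine Matrix.posDef_iff_dotProduct_mulVec.mpr ⟨hM.1, fun x hx => ?_⟩
  have h0 : M *ᵥ x ≠ 0 := by
    intro hmx
    apply hx
    have := congrArg (fun v => M⁻¹ *ᵥ v) hmx
    simpa [Matrix.mulVec_mulVec, Matrix.nonsing_inv_mul M (isUnit_iff_ne_zero.mpr h)] using this
  have hne : star x ⬝ᵥ M *ᵥ x ≠ 0 := fun hz => h0 ((hM.dotProduct_mulVec_zero_iff x).mp hz)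
  exact lt_of_le_of_ne (hM.dotProduct_mulVec_nonneg x) (Ne.symm hne)

lemma auxSqrtPosDef {n : Type*} [Fintype n] [DecidableEq n] {M : Matrix n n ℝ}
    (hM : M.PosDef) : (hM.posSemidef.sqrt).PosDef := by
  apply auxPosDefOfUnit hM.posSemidef.posSemidef_sqrt
  intro hz
  have : hM.posSemidef.sqrt.det * hM.posSemidef.sqrt.det = M.det := by
    rw [← Matrix.det_mul, hM.posSemidef.sqrt_mul_self]
  rw [hz, mul_zero] at this
  exact (ne_of_gt hM.det_pos) this.symm

lemma auxConjPosDef {n : Type*} [Fintype n] [DecidableEq n] {M B : Matrix n n ℝ}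
    (hM : M.PosDef) (hB : B.IsHermitian) (hBd : B.det ≠ 0) : (B * M * B).PosDef := by
  apply auxPosDefOfUnit
  · have := hM.posSemidef.conjTranspose_mul_mul_same B
    rwa [hB.eq] at this
  · simp only [Matrix.det_mul]
    exact mul_ne_zero (mul_ne_zero hBd (ne_of_gt hM.det_pos)) hBd

lemma msqrt_posDef_eq {n : ℕ} {M : Matrix (Fin n) (Fin n) ℝ} (hM : M.PosDef) :
    msqrt M = hM.posSemidef.sqrt := by
  unfold msqrt
  exact dif_pos hM.posSemidef

/-- The matrix `A = Σ₂^{1/2} (Σ₂^{1/2} Σ₁ Σ₂^{1/2})^{-1/2} Σ₂^{1/2}` is symmetric positive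
definite and satisfies `A Σ₁ A = Σ₂`. -/
theorem affine_transport_matrix_identity {d : ℕ}
    (S₁ S₂ : Matrix (Fin d) (Fin d) ℝ) (h₁ : S₁.PosDef) (h₂ : S₂.PosDef)
    (A : Matrix (Fin d) (Fin d) ℝ)
    (hA : A = msqrt S₂ * (msqrt (msqrt S₂ * S₁ * msqrt S₂))⁻¹ * msqrt S₂) :
    A.PosDef ∧ A * S₁ * A = S₂ := by
  have hB := msqrt_posDef_eq h₂
  have hBpd : (msqrt S₂).PosDef := hB ▸ auxSqrtPosDef h₂
  have hBsq : msqrt S₂ * msqrt S₂ = S₂ := by rw [hB]; exact h₂.posSemidef.sqrt_mul_self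
  have hBherm : (msqrt S₂).IsHermitian := hBpd.isHermitian
  have hMpd : (msqrt S₂ * S₁ * msqrt S₂).PosDef :=
    auxConjPosDef h₁ hBherm (ne_of_gt hBpd.det_pos)
  have hC := msqrt_posDef_eq hMpd
  have hCpd : (msqrt (msqrt S₂ * S₁ * msqrt S₂)).PosDef := hC ▸ auxSqrtPosDef hMpd
  have hCsq : msqrt (msqrt S₂ * S₁ * msqrt S₂) * msqrt (msqrt S₂ * S₁ * msqrt S₂)
      = msqrt S₂ * S₁ * msqrt S₂ := by rw [hC]; exact hMpd.posSemidef.sqrt_mul_self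
  have hCinv : (msqrt (msqrt S₂ * S₁ * msqrt S₂))⁻¹.PosDef := hCpd.inv
  constructor
  · rw [hA]
    exact auxConjPosDef hCinv hBherm (ne_of_gt hBpd.det_pos)
  · set C := msqrt (msqrt S₂ * S₁ * msqrt S₂) with hCdef
    have hCu : IsUnit C := hCpd.isUnit
    rw [hA]
    have : msqrt S₂ * C⁻¹ * msqrt S₂ * S₁ * (msqrt S₂ * C⁻¹ * msqrt S₂)
        = msqrt S₂ * (C⁻¹ * (msqrt S₂ * S₁ * msqrt S₂) * C⁻¹) * msqrt S₂ := by
      simp [Matrix.mul_assoc]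
    rw [this, ← hCsq]
    rw [show C⁻¹ * (C * C) * C⁻¹ = (C⁻¹ * C) * (C * C⁻¹) by simp [Matrix.mul_assoc]]
    rw [Matrix.nonsing_inv_mul C (by simpa using hCpd.det_pos.ne'),
      Matrix.mul_nonsing_inv C (by simpa using hCpd.det_pos.ne')]
    simpa using hBsq


end
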